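/- There exists an interval linear program whose primal and dual optimal value sets are equal, yet the duality gap is not strongly zero. -/

import Mathlib

/-- Optimal value of the one-dimensional primal LP `min c·x  s.t.  a·x ≤ b`. -/
noncomputable def pval (a b c : ℝ) : EReal :=
  sInf ((fun x => ((c * x : ℝ) : EReal)) '' {x : ℝ | a * x ≤ b})

/-- Optimal value of its dual `max b·y  s.t.  a·y = c, y ≤ 0`. -/
noncomputable def dval (a b c : ℝ) : EReal :=
  sSup ((fun y => ((b * y : ℝ) : EReal)) '' {y : ℝ | a * y = c ∧ y ≤ 0})

lemma pval_top : pval 0 (-1) (-1) = ⊤ := by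
  unfold pval
  have h : {x : ℝ | 0 * x ≤ -1} = ∅ := by ext x; simp
  rw [h]; simp

lemma dval_bot : dval 0 (-1) (-1) = ⊥ := by
  unfold dval
  have h : {y : ℝ | 0 * y = -1 ∧ y ≤ 0} = ∅ := by ext y; simp
  rw [h]; simp

lemma pval_bot : pval 0 1 1 = ⊥ := by
  unfold pval
  have hs : {x : ℝ | 0 * x ≤ 1} = Set.univ := by ext x; simp
  rw [hs, sInf_eq_bot]
  intro b hb
  induction b using EReal.rec with
  | bot => exact absurd hb (lt_irrefl _)
  | coe t =>
      exact ⟨((1*(t-1) : ℝ) : EReal), ⟨t-1, trivial, rfl⟩,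
        by exact_mod_cast (by linarith : (1*(t-1):ℝ) < t)⟩
  | top =>
      exact ⟨((1*0:ℝ):EReal), ⟨0, trivial, rfl⟩, by simp⟩

lemma dval_top : dval 0 (-1) 0 = ⊤ := by
  unfold dval
  have hs : {y : ℝ | 0 * y = 0 ∧ y ≤ 0} = Set.Iic 0 := by ext y; simp
  rw [hs, sSup_eq_top]
  intro b hb
  induction b using EReal.rec with
  | top => exact absurd hb (lt_irrefl _)
  | coe t =>
      refine ⟨((-1*(-(|t|+1)) : ℝ) : EReal), ⟨-(|t|+1), by simp only [Set.mem_Iic]; linarith [abs_nonneg t], rfl⟩, ?_⟩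
      have : (t:ℝ) < -1*(-(|t|+1)) := by
        have := abs_nonneg t
        have := le_abs_self t
        linarith
      exact_mod_cast this
  | bot =>
      exact ⟨((-1*0:ℝ):EReal), ⟨0, by simp, rfl⟩, by simp⟩

lemma pval_real (r : ℝ) :
    pval (1+|r|)⁻¹ (-r * (1+|r|)⁻¹) (-1) = (r : EReal) := by
  have hinv : (0:ℝ) < (1+|r|)⁻¹ := by positivity
  have hset : {x : ℝ | (1+|r|)⁻¹ * x ≤ -r * (1+|r|)⁻¹} = Set.Iic (-r) := by
    ext x
    simp only [Set.mem_setOf_eq, Set.mem_Iic]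
    rw [mul_comm ((1+|r|)⁻¹) x]
    exact mul_le_mul_iff_of_pos_right hinv
  unfold pval
  rw [hset]
  apply IsLeast.csInf_eq
  constructor
  · exact ⟨-r, by simp, by norm_num⟩
  · rintro v ⟨x, hx, rfl⟩
    simp only [Set.mem_Iic] at hx
    show (r:EReal) ≤ ((-1*x : ℝ) : EReal)
    exact_mod_cast (by linarith : (r:ℝ) ≤ -1*x)

lemma dval_real (r : ℝ) :
    dval (1+|r|)⁻¹ (-r * (1+|r|)⁻¹) (-1) = (r : EReal) := by
  have h1 : (0:ℝ) < 1 + |r| := by positivity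
  have hset : {y : ℝ | (1+|r|)⁻¹ * y = -1 ∧ y ≤ 0} = {-(1+|r|)} := by
    ext y
    simp only [Set.mem_setOf_eq, Set.mem_singleton_iff]
    constructor
    · rintro ⟨h, -⟩
      field_simp at h
      linarith
    · rintro rfl
      constructor
      · field_simp
      · linarith
  unfold dval
  rw [hset, Set.image_singleton, sSup_singleton]
  congr 1
  field_simp

lemma inv_bound (r : ℝ) : (1+|r|)⁻¹ ≤ 1 := by
  have h : (1:ℝ) ≤ 1 + |r| := by linarith [abs_nonneg r]
  rw [inv_le_one_iff₀]
  right; exact h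

lemma abs_bound (r : ℝ) : -1 ≤ -r * (1+|r|)⁻¹ ∧ -r * (1+|r|)⁻¹ ≤ 1 := by
  have h1 : (0:ℝ) < 1 + |r| := by positivity
  have h : |(-r * (1+|r|)⁻¹)| ≤ 1 := by
    rw [abs_mul, abs_neg, abs_inv, abs_of_pos h1, ← div_eq_mul_inv, div_le_one h1]
    linarith
  exact abs_le.mp h

/-- There exists an interval linear program whose primal and dual optimal value
sets coincide, yet whose duality gap is not strongly zero. -/
theorem exists_equal_value_sets_not_strongly_zero_dg :
    ∃ aL aU bL bU cL cU : ℝ, aL ≤ aU ∧ bL ≤ bU ∧ cL ≤ cU ∧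
      ({v : EReal | ∃ a b c, aL ≤ a ∧ a ≤ aU ∧ bL ≤ b ∧ b ≤ bU ∧ cL ≤ c ∧ c ≤ cU ∧
          v = pval a b c} =
        {v : EReal | ∃ a b c, aL ≤ a ∧ a ≤ aU ∧ bL ≤ b ∧ b ≤ bU ∧ cL ≤ c ∧ c ≤ cU ∧
          v = dval a b c}) ∧
      ¬ (∀ a b c, aL ≤ a → a ≤ aU → bL ≤ b → b ≤ bU → cL ≤ c → c ≤ cU →
          pval a b c = dval a b c) := by
  refine ⟨0, 1, -1, 1, -1, 1, by norm_num, by norm_num, by norm_num, ?_, ?_⟩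
  · have hp : ∀ v : EReal, ∃ a b c : ℝ, (0:ℝ) ≤ a ∧ a ≤ 1 ∧ (-1:ℝ) ≤ b ∧ b ≤ 1 ∧
        (-1:ℝ) ≤ c ∧ c ≤ 1 ∧ v = pval a b c := by
      intro v
      induction v using EReal.rec with
      | bot =>
          exact ⟨0, 1, 1, le_rfl, by norm_num, by norm_num, by norm_num, by norm_num,
            by norm_num, pval_bot.symm⟩
      | coe r =>
          obtain ⟨hb1, hb2⟩ := abs_bound r
          exact ⟨(1+|r|)⁻¹, -r*(1+|r|)⁻¹, -1, by positivity,
            inv_bound r, hb1, hb2, by norm_num, by norm_num, (pval_real r).symm⟩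
      | top =>
          exact ⟨0, -1, -1, le_rfl, by norm_num, by norm_num, by norm_num, by norm_num,
            by norm_num, pval_top.symm⟩
    have hd : ∀ v : EReal, ∃ a b c : ℝ, (0:ℝ) ≤ a ∧ a ≤ 1 ∧ (-1:ℝ) ≤ b ∧ b ≤ 1 ∧
        (-1:ℝ) ≤ c ∧ c ≤ 1 ∧ v = dval a b c := by
      intro v
      induction v using EReal.rec with
      | bot =>
          exact ⟨0, -1, -1, le_rfl, by norm_num, by norm_num, by norm_num, by norm_num,
            by norm_num, dval_bot.symm⟩
      | coe r =>
          obtain ⟨hb1, hb2⟩ := abs_bound r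
          exact ⟨(1+|r|)⁻¹, -r*(1+|r|)⁻¹, -1, by positivity,
            inv_bound r, hb1, hb2, by norm_num, by norm_num, (dval_real r).symm⟩
      | top =>
          exact ⟨0, -1, 0, le_rfl, by norm_num, by norm_num, by norm_num, by norm_num,
            by norm_num, dval_top.symm⟩
    ext v
    simp only [Set.mem_setOf_eq]
    exact ⟨fun _ => hd v, fun _ => hp v⟩
  · intro h
    have := h 0 (-1) (-1) le_rfl (by norm_num) (by norm_num) (by norm_num)
      (by norm_num) (by norm_num)
    rw [pval_top, dval_bot] at this
    exact absurd this (by simp)
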